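/- Let m be a positive integer and suppose φ = I^m_{-,2} f, where f is locally integrable on (0,∞) and ∫₁^∞ |f(s)| s^{2m-1} ds < ∞. Then f(t) = ((-D)^m φ)(t) for almost all t > 0, where D = (1/(2t)) d/dt. -/

import Mathlib

open MeasureTheory Real Set

/-- Right-sided modified Erdélyi–Kober fractional integral of order `α`. -/
noncomputable def EKminus (α : ℝ) (f : ℝ → ℝ) (t : ℝ) : ℝ :=
  2 * (Real.Gamma α)⁻¹ * ∫ s in Ioi t, f s * s * (s ^ 2 - t ^ 2) ^ (α - 1)

/-- The operator `-D` where `D = (1/(2t)) d/dt`. -/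
noncomputable def negD (g : ℝ → ℝ) : ℝ → ℝ := fun t => -(deriv g t) / (2 * t)

section Aux

open Filter Topology
open scoped ENNReal NNReal

lemma integral_Ioi_sub (H : ℝ → ℝ) (hH : Integrable H) (a t : ℝ) :
    ∫ u in Ioi t, H u = (∫ u in Ioi a, H u) - ∫ u in a..t, H u := by
  rcases le_total a t with h | h
  · rw [intervalIntegral.integral_of_le h, eq_sub_iff_add_eq, add_comm,
      ← setIntegral_union Ioc_disjoint_Ioi_same measurableSet_Ioi
        hH.integrableOn hH.integrableOn, Ioc_union_Ioi_eq_Ioi h]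
  · rw [intervalIntegral.integral_of_ge h, sub_neg_eq_add, add_comm,
      ← setIntegral_union Ioc_disjoint_Ioi_same measurableSet_Ioi
        hH.integrableOn hH.integrableOn, Ioc_union_Ioi_eq_Ioi h]

lemma cont_integral_Ioi (H : ℝ → ℝ) (hH : Integrable H) :
    Continuous (fun t => ∫ u in Ioi t, H u) := by
  have := intervalIntegral.continuous_primitive (fun a b => hH.intervalIntegrable) 0
  have h2 : (fun t => ∫ u in Ioi t, H u)
      = fun t => (∫ u in Ioi (0:ℝ), H u) - ∫ u in (0:ℝ)..t, H u := by
    ext t; exact integral_Ioi_sub H hH 0 t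
  rw [h2]; exact continuous_const.sub this

lemma hasDerivAt_integral_Ioi (H : ℝ → ℝ) (hH : Integrable H) {t : ℝ}
    (hc : ContinuousAt H t) :
    HasDerivAt (fun x => ∫ u in Ioi x, H u) (-H t) t := by
  have h2 : (fun x => ∫ u in Ioi x, H u)
      = fun x => (∫ u in Ioi (0:ℝ), H u) - ∫ u in (0:ℝ)..x, H u := by
    ext x; exact integral_Ioi_sub H hH 0 x
  rw [h2]
  have := intervalIntegral.integral_hasDerivAt_right (a := (0:ℝ)) (hH.intervalIntegrable)
    ⟨univ, univ_mem, hH.aestronglyMeasurable.restrict⟩ hc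
  exact ((hasDerivAt_const t (∫ u in Ioi (0:ℝ), H u)).sub this).congr_deriv (by ring)

lemma ae_hasDerivAt_integral_Ioi (H : ℝ → ℝ) (hH : Integrable H) :
    ∀ᵐ t, HasDerivAt (fun x => ∫ u in Ioi x, H u) (-H t) t := by
  filter_upwards [(IsUnifLocDoublingMeasure.vitaliFamily (volume : Measure ℝ) 1).ae_tendsto_average
    hH.locallyIntegrable] with t ht
  rw [hasDerivAt_iff_tendsto_slope, ← nhdsLT_sup_nhdsGT, tendsto_sup]
  have key : ∀ y : ℝ, y ≠ t →
      slope (fun x => ∫ u in Ioi x, H u) t y = -⨍ u in Icc (min t y) (max t y), H u := by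
    intro y hy
    rcases lt_or_gt_of_ne hy with h | h
    · rw [min_eq_right h.le, max_eq_left h.le, slope_def_field, setAverage_eq, measureReal_def,
        integral_Ioi_sub H hH y t, integral_Ioi_sub H hH y y,
        Real.volume_Icc, ENNReal.toReal_ofReal (by linarith : (0:ℝ) ≤ t - y),
        intervalIntegral.integral_of_le h.le, integral_Icc_eq_integral_Ioc]
      have h1 : t - y ≠ 0 := by linarith
      have h2 : y - t ≠ 0 := by linarith
      simp only [intervalIntegral.integral_same, sub_zero, smul_eq_mul]
      field_simp
      ring
    · rw [min_eq_left h.le, max_eq_right h.le, slope_def_field, setAverage_eq, measureReal_def,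
        integral_Ioi_sub H hH t y, integral_Ioi_sub H hH t t,
        Real.volume_Icc, ENNReal.toReal_ofReal (by linarith : (0:ℝ) ≤ y - t),
        intervalIntegral.integral_of_le h.le, integral_Icc_eq_integral_Ioc]
      have h1 : t - y ≠ 0 := by linarith
      have h2 : y - t ≠ 0 := by linarith
      simp only [intervalIntegral.integral_same, sub_zero, smul_eq_mul]
      field_simp
      ring
  constructor
  · apply Tendsto.congr' _ ((ht.comp (Real.tendsto_Icc_vitaliFamily_left t)).neg)
    filter_upwards [self_mem_nhdsWithin] with y (hy : y < t)
    rw [key y hy.ne, min_eq_right hy.le, max_eq_left hy.le]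
    rfl
  · apply Tendsto.congr' _ ((ht.comp (Real.tendsto_Icc_vitaliFamily_right t)).neg)
    filter_upwards [self_mem_nhdsWithin] with y (hy : t < y)
    rw [key y hy.ne', min_eq_left hy.le, max_eq_right hy.le]
    rfl

lemma integral_Ioi_indicator (h : ℝ → ℝ) {c t : ℝ} (hct : c ≤ t) :
    ∫ u in Ioi t, h u = ∫ u in Ioi t, (Ioi c).indicator h u := by
  refine (setIntegral_congr_fun measurableSet_Ioi fun u hu => ?_).symm
  exact indicator_of_mem (lt_of_le_of_lt hct hu) h

lemma eventuallyEq_integral_Ioi (h : ℝ → ℝ) {c t : ℝ} (hct : c < t) :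
    (fun x => ∫ u in Ioi x, (Ioi c).indicator h u) =ᶠ[𝓝 t] fun x => ∫ u in Ioi x, h u := by
  filter_upwards [eventually_gt_nhds hct] with x hx
  exact (integral_Ioi_indicator h hx.le).symm

lemma contAt_integral_Ioi_loc (h : ℝ → ℝ) {c t : ℝ} (hi : IntegrableOn h (Ioi c)) (hct : c < t) :
    ContinuousAt (fun x => ∫ u in Ioi x, h u) t := by
  have hH : Integrable ((Ioi c).indicator h) :=
    (integrable_indicator_iff measurableSet_Ioi).2 hi
  exact ((cont_integral_Ioi _ hH).continuousAt).congr (eventuallyEq_integral_Ioi h hct)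

lemma hasDerivAt_integral_Ioi_loc (h : ℝ → ℝ) {c t : ℝ} (hi : IntegrableOn h (Ioi c))
    (hct : c < t) (hc : ContinuousAt h t) :
    HasDerivAt (fun x => ∫ u in Ioi x, h u) (-h t) t := by
  have hH : Integrable ((Ioi c).indicator h) :=
    (integrable_indicator_iff measurableSet_Ioi).2 hi
  have hHc : ContinuousAt ((Ioi c).indicator h) t := by
    apply hc.congr
    filter_upwards [eventually_gt_nhds hct] with x hx
    exact (indicator_of_mem hx h).symm
  have := hasDerivAt_integral_Ioi _ hH hHc
  have ht' : (Ioi c).indicator h t = h t := indicator_of_mem hct h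
  rw [ht'] at this
  exact this.congr_of_eventuallyEq (eventuallyEq_integral_Ioi h hct).symm

lemma ae_hasDerivAt_integral_Ioi_loc (h : ℝ → ℝ) {c : ℝ} (hi : IntegrableOn h (Ioi c)) :
    ∀ᵐ t ∂(volume.restrict (Ioi c)), HasDerivAt (fun x => ∫ u in Ioi x, h u) (-h t) t := by
  have hH : Integrable ((Ioi c).indicator h) :=
    (integrable_indicator_iff measurableSet_Ioi).2 hi
  filter_upwards [ae_restrict_of_ae (ae_hasDerivAt_integral_Ioi _ hH),
    ae_restrict_mem measurableSet_Ioi] with t ht htc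
  have ht' : (Ioi c).indicator h t = h t := indicator_of_mem htc h
  rw [ht'] at ht
  exact ht.congr_of_eventuallyEq (eventuallyEq_integral_Ioi h htc).symm

variable {m : ℕ} {f : ℝ → ℝ}

lemma fmeas (hloc : LocallyIntegrableOn f (Ioi (0 : ℝ))) {c : ℝ} (hc : 0 < c) :
    AEStronglyMeasurable f (volume.restrict (Ioi c)) :=
  hloc.aestronglyMeasurable.mono_measure (Measure.restrict_mono (Ioi_subset_Ioi hc.le) le_rfl)

lemma int_abs_pow (hloc : LocallyIntegrableOn f (Ioi (0 : ℝ)))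
    (hint : IntegrableOn (fun s => |f s| * s ^ (2 * (m : ℝ) - 1)) (Ioi (1 : ℝ)))
    (n : ℕ) (hn : (n : ℝ) ≤ 2 * (m : ℝ) - 1) {c : ℝ} (hc : 0 < c) :
    IntegrableOn (fun s => |f s| * s ^ n) (Ioi c) := by
  have hM : c ≤ max c 1 := le_max_left _ _
  rw [← Ioc_union_Ioi_eq_Ioi hM, integrableOn_union]
  constructor
  · have hcomp : IsCompact (Icc c (max c 1)) := isCompact_Icc
    have hsub : Icc c (max c 1) ⊆ Ioi 0 := fun x hx => lt_of_lt_of_le hc hx.1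
    have hf1 : IntegrableOn f (Icc c (max c 1)) := hloc.integrableOn_compact_subset hsub hcomp
    have hf2 : IntegrableOn (fun s => |f s| * s ^ n) (Icc c (max c 1)) :=
      IntegrableOn.mul_continuousOn hf1.abs (by fun_prop) hcomp
    exact hf2.mono_set Ioc_subset_Icc_self
  · have h1M : (1:ℝ) ≤ max c 1 := le_max_right _ _
    apply Integrable.mono' (g := fun s => |f s| * s ^ (2 * (m : ℝ) - 1))
      (hint.mono_set (Ioi_subset_Ioi h1M))
    · have h := (fmeas hloc (lt_of_lt_of_le hc hM)).norm
      simp only [Real.norm_eq_abs] at h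
      exact h.mul (continuous_pow n).aestronglyMeasurable.restrict
    · filter_upwards [ae_restrict_mem measurableSet_Ioi] with s hs
      have hs1 : (1:ℝ) ≤ s := le_of_lt (lt_of_le_of_lt h1M hs)
      have h2 : s ^ n ≤ s ^ (2 * (m : ℝ) - 1) := by
        rw [← Real.rpow_natCast s n]
        exact Real.rpow_le_rpow_of_exponent_le hs1 hn
      rw [Real.norm_eq_abs, abs_mul, abs_abs, abs_of_nonneg (by positivity : (0:ℝ) ≤ s ^ n)]
      exact mul_le_mul_of_nonneg_left h2 (abs_nonneg _)

lemma int_kernel (hloc : LocallyIntegrableOn f (Ioi (0 : ℝ)))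
    (hint : IntegrableOn (fun s => |f s| * s ^ (2 * (m : ℝ) - 1)) (Ioi (1 : ℝ)))
    (k : ℕ) (hk : (2 * k + 1 : ℝ) ≤ 2 * (m : ℝ) - 1) (t : ℝ) {c : ℝ} (hc : 0 < c) :
    IntegrableOn (fun s => f s * s * (s ^ 2 - t ^ 2) ^ k) (Ioi c) := by
  set C : ℝ := 1 + t ^ 2 / c ^ 2 with hC
  have hn : ((2 * k + 1 : ℕ) : ℝ) ≤ 2 * (m : ℝ) - 1 := by push_cast; linarith
  apply Integrable.mono' (g := fun s => C ^ k * (|f s| * s ^ (2 * k + 1)))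
    ((int_abs_pow hloc hint (2 * k + 1) hn hc).const_mul _)
  · exact ((fmeas hloc hc).mul continuous_id.aestronglyMeasurable.restrict).mul
      (by fun_prop : Continuous fun s : ℝ => (s ^ 2 - t ^ 2) ^ k).aestronglyMeasurable.restrict
  · filter_upwards [ae_restrict_mem measurableSet_Ioi] with s hs
    have hcs : c < s := hs
    have hs0 : 0 < s := lt_trans hc hcs
    have hdiv : t ^ 2 / c ^ 2 * c ^ 2 = t ^ 2 := div_mul_cancel₀ _ (by positivity)
    have hkey : t ^ 2 ≤ t ^ 2 / c ^ 2 * s ^ 2 := by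
      have h2 : c ^ 2 ≤ s ^ 2 := by nlinarith
      nlinarith [mul_le_mul_of_nonneg_left h2 (div_nonneg (sq_nonneg t) (sq_nonneg c))]
    have h1 : |s ^ 2 - t ^ 2| ≤ s ^ 2 * C := by
      rw [abs_le, hC]
      constructor <;> nlinarith [sq_nonneg t, sq_nonneg s]
    calc ‖f s * s * (s ^ 2 - t ^ 2) ^ k‖
        = |f s| * (s * |s ^ 2 - t ^ 2| ^ k) := by
          rw [Real.norm_eq_abs, abs_mul, abs_mul, abs_pow, abs_of_pos hs0, mul_assoc]
      _ ≤ |f s| * (s * (s ^ 2 * C) ^ k) := by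
          apply mul_le_mul_of_nonneg_left _ (abs_nonneg _)
          apply mul_le_mul_of_nonneg_left _ hs0.le
          exact pow_le_pow_left₀ (abs_nonneg _) h1 k
      _ = C ^ k * (|f s| * s ^ (2 * k + 1)) := by
          rw [mul_pow, ← pow_mul]
          ring

lemma prim_eval (k : ℕ) {t s : ℝ} (hts : t ≤ s) :
    ∫ u in Ioo t s, 2 * u * (s ^ 2 - u ^ 2) ^ k = (s ^ 2 - t ^ 2) ^ (k + 1) / (k + 1) := by
  have hD : ∀ u : ℝ, HasDerivAt (fun u => -((s ^ 2 - u ^ 2) ^ (k + 1)) / (k + 1))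
      (2 * u * (s ^ 2 - u ^ 2) ^ k) u := by
    intro u
    have h1 : HasDerivAt (fun u : ℝ => s ^ 2 - u ^ 2) (-(2 * u)) u := by
      simpa using ((hasDerivAt_pow 2 u).const_sub (s ^ 2))
    have h2 := (h1.pow (k + 1)).neg.div_const ((k : ℝ) + 1)
    refine h2.congr_deriv ?_
    have : ((k : ℝ) + 1) ≠ 0 := by positivity
    push_cast
    field_simp
  rw [← integral_Ioc_eq_integral_Ioo, ← intervalIntegral.integral_of_le hts,
    intervalIntegral.integral_eq_sub_of_hasDerivAt (fun u _ => hD u)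
      ((Continuous.intervalIntegrable (by fun_prop) t s))]
  have hss : s ^ 2 - s ^ 2 = 0 := by ring
  rw [hss]
  simp [zero_pow (Nat.succ_ne_zero k)]
  ring

/-- The kernel integral `∫_t^∞ f(s) s (s²-t²)^k ds`. -/
noncomputable def Gk (f : ℝ → ℝ) (k : ℕ) (t : ℝ) : ℝ :=
  ∫ s in Ioi t, f s * s * (s ^ 2 - t ^ 2) ^ k

lemma fubini_step (hloc : LocallyIntegrableOn f (Ioi (0 : ℝ)))
    (hint : IntegrableOn (fun s => |f s| * s ^ (2 * (m : ℝ) - 1)) (Ioi (1 : ℝ)))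
    (k : ℕ) (hk : (2 * (k : ℝ) + 3) ≤ 2 * (m : ℝ) - 1) {t : ℝ} (ht : 0 < t) :
    IntegrableOn (fun u => 2 * u * Gk f k u) (Ioi t) ∧
    ∫ u in Ioi t, (2 * u * Gk f k u) = Gk f (k + 1) t / (k + 1) := by
  simp only [Gk]
  set μ := volume.restrict (Ioi t) with hμ
  set P : ℝ × ℝ → ℝ := fun p => 2 * p.1 * (f p.2 * p.2 * (p.2 ^ 2 - p.1 ^ 2) ^ k) with hP
  set F : ℝ × ℝ → ℝ := {p : ℝ × ℝ | p.1 < p.2}.indicator P with hF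
  have hPm : AEStronglyMeasurable P (μ.prod μ) := by
    have h1 : AEStronglyMeasurable (fun p : ℝ × ℝ => f p.2) (μ.prod μ) := (fmeas hloc ht).comp_snd
    exact ((continuous_const.mul continuous_fst).aestronglyMeasurable).mul
      ((h1.mul continuous_snd.aestronglyMeasurable).mul
        (by fun_prop : Continuous fun p : ℝ × ℝ => (p.2 ^ 2 - p.1 ^ 2) ^ k).aestronglyMeasurable)
  have hsm : MeasurableSet {p : ℝ × ℝ | p.1 < p.2} := measurableSet_lt measurable_fst measurable_snd
  have hFm : AEStronglyMeasurable F (μ.prod μ) := hPm.indicator hsm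
  have sec_u : ∀ u s : ℝ, F (u, s) = (Ioi u).indicator
      (fun s => 2 * u * (f s * s * (s ^ 2 - u ^ 2) ^ k)) s := by
    intro u s
    by_cases h : u < s <;> simp [hF, hP, indicator_apply, mem_Ioi, mem_setOf_eq, h]
  have sec_s : ∀ u s : ℝ, F (u, s) = (Iio s).indicator
      (fun u => 2 * u * (f s * s * (s ^ 2 - u ^ 2) ^ k)) u := by
    intro u s
    by_cases h : u < s <;> simp [hF, hP, indicator_apply, mem_Ioi, mem_Iio, mem_setOf_eq, h]
  have houter : IntegrableOn (fun s => |f s| * s * ((s ^ 2 - t ^ 2) ^ (k + 1) / (k + 1)))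
      (Ioi t) := by
    have h0 := ((int_kernel hloc hint (k + 1) (by push_cast; linarith) t ht).abs).div_const
      ((k : ℝ) + 1)
    apply h0.congr
    filter_upwards [ae_restrict_mem measurableSet_Ioi] with s hs
    have hs0 : (0 : ℝ) < s := lt_trans ht hs
    have hst : t ^ 2 ≤ s ^ 2 := by nlinarith [mem_Ioi.mp hs]
    rw [abs_mul, abs_mul, abs_of_pos hs0,
      abs_of_nonneg (pow_nonneg (by nlinarith : (0:ℝ) ≤ s ^ 2 - t ^ 2) (k+1))]
    push_cast
    ring
  have inner_eq : ∀ s ∈ Ioi t, (∫⁻ u, (‖F (u, s)‖₊ : ℝ≥0∞) ∂μ)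
      = ENNReal.ofReal (|f s| * s * ((s ^ 2 - t ^ 2) ^ (k + 1) / (k + 1))) := by
    intro s hs
    have hs' : t < s := hs
    have hs0 : (0 : ℝ) < s := lt_trans ht hs'
    set g : ℝ → ℝ := fun u => 2 * u * (|f s| * s * (s ^ 2 - u ^ 2) ^ k) with hg
    have e1 : ∀ u ∈ Ioi t, (‖F (u, s)‖₊ : ℝ≥0∞)
        = ENNReal.ofReal ((Ioo t s).indicator g u) := by
      intro u hu
      have hu' : t < u := hu
      rw [sec_s u s]
      by_cases h : u < s
      · have i1 : (Iio s).indicator (fun u => 2 * u * (f s * s * (s ^ 2 - u ^ 2) ^ k)) u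
            = 2 * u * (f s * s * (s ^ 2 - u ^ 2) ^ k) :=
          indicator_of_mem (show u ∈ Iio s from h) _
        have i2 : (Ioo t s).indicator g u = g u :=
          indicator_of_mem (show u ∈ Ioo t s from ⟨hu', h⟩) _
        rw [i1, i2, ← enorm_eq_nnnorm, Real.enorm_eq_ofReal_abs]
        congr 1
        have h1 : (0:ℝ) < s ^ 2 - u ^ 2 := by nlinarith
        rw [hg, abs_mul, abs_mul, abs_mul, abs_mul, abs_of_pos hs0,
          abs_of_pos (by linarith : (0:ℝ) < 2), abs_of_pos (lt_trans ht hu'),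
          abs_of_pos (by positivity : (0:ℝ) < (s ^ 2 - u ^ 2) ^ k)]
      · have i1 : (Iio s).indicator (fun u => 2 * u * (f s * s * (s ^ 2 - u ^ 2) ^ k)) u
            = 0 := indicator_of_notMem (show u ∉ Iio s from h) _
        have i2 : (Ioo t s).indicator g u = 0 :=
          indicator_of_notMem (show u ∉ Ioo t s from fun hm => h hm.2) _
        rw [i1, i2]
        simp
    rw [hμ, setLIntegral_congr_fun_ae measurableSet_Ioi (ae_of_all _ e1)]
    have hgint : Integrable ((Ioo t s).indicator g) μ := by
      rw [hμ]
      exact ((integrable_indicator_iff measurableSet_Ioo).2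
        ((Continuous.integrableOn_Icc (by fun_prop)).mono_set Ioo_subset_Icc_self)).restrict
    have hgnn : 0 ≤ᵐ[μ] (Ioo t s).indicator g := by
      apply ae_of_all
      intro u
      apply indicator_nonneg
      intro u' hu'
      have : (0:ℝ) < s ^ 2 - u' ^ 2 := by
        rcases hu' with ⟨h1, h2⟩
        nlinarith [lt_trans ht h1]
      have hu0 : (0:ℝ) < u' := lt_trans ht hu'.1
      positivity
    rw [← ofReal_integral_eq_lintegral_ofReal hgint hgnn]
    congr 1
    rw [hμ, setIntegral_indicator measurableSet_Ioo,
      inter_eq_self_of_subset_right Ioo_subset_Ioi_self]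
    have : ∀ u : ℝ, g u = (|f s| * s) * (2 * u * (s ^ 2 - u ^ 2) ^ k) := fun u => by
      rw [hg]; ring
    rw [integral_congr_ae (ae_of_all _ this), integral_const_mul, prim_eval k hs'.le]
  have hFi : Integrable F (μ.prod μ) := by
    refine ⟨hFm, ?_⟩
    rw [HasFiniteIntegral]
    rw [lintegral_prod_symm _ hFm.enorm]
    simp only [enorm_eq_nnnorm]
    rw [hμ, setLIntegral_congr_fun_ae measurableSet_Ioi (ae_of_all _ (by
      intro s hs
      exact inner_eq s hs))]
    calc ∫⁻ s in Ioi t, ENNReal.ofReal (|f s| * s * ((s ^ 2 - t ^ 2) ^ (k + 1) / (k + 1)))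
        ≤ ∫⁻ s in Ioi t, (‖|f s| * s * ((s ^ 2 - t ^ 2) ^ (k + 1) / (k + 1))‖₊ : ℝ≥0∞) := by
          apply lintegral_mono
          intro s
          exact le_trans (ENNReal.ofReal_le_ofReal (le_abs_self _))
            (le_of_eq ((enorm_eq_nnnorm _).symm.trans (Real.enorm_eq_ofReal_abs _)).symm)
      _ < ⊤ := houter.2
  have val_u : ∀ u ∈ Ioi t, (∫ s, F (u, s) ∂μ)
      = 2 * u * ∫ s in Ioi u, f s * s * (s ^ 2 - u ^ 2) ^ k := by
    intro u hu
    rw [integral_congr_ae (ae_of_all _ (fun s => sec_u u s)), hμ,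
      setIntegral_indicator measurableSet_Ioi, Ioi_inter_Ioi,
      max_eq_right (le_of_lt hu), integral_const_mul]
  have val_s : ∀ s ∈ Ioi t, (∫ u, F (u, s) ∂μ)
      = f s * s * ((s ^ 2 - t ^ 2) ^ (k + 1) / (k + 1)) := by
    intro s hs
    have : ∀ u : ℝ, (Iio s).indicator (fun u => 2 * u * (f s * s * (s ^ 2 - u ^ 2) ^ k)) u
        = (Iio s).indicator (fun u => (f s * s) * (2 * u * (s ^ 2 - u ^ 2) ^ k)) u := by
      intro u
      by_cases h : u < s <;> simp [indicator_apply, h] <;> ring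
    rw [integral_congr_ae (ae_of_all _ (fun u => sec_s u s)),
      integral_congr_ae (ae_of_all _ this), hμ,
      setIntegral_indicator measurableSet_Iio, Ioi_inter_Iio,
      integral_const_mul, prim_eval k (le_of_lt hs)]
  constructor
  · have hIa := hFi.integral_prod_left
    apply hIa.congr
    filter_upwards [ae_restrict_mem measurableSet_Ioi] with u hu
    exact val_u u hu
  · have swap := integral_integral_swap (f := fun u s => F (u, s)) hFi
    calc ∫ u in Ioi t, (2 * u * ∫ s in Ioi u, f s * s * (s ^ 2 - u ^ 2) ^ k)
        = ∫ u in Ioi t, ∫ s, F (u, s) ∂μ :=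
          setIntegral_congr_fun measurableSet_Ioi (fun u hu => (val_u u hu).symm)
      _ = ∫ s in Ioi t, ∫ u, F (u, s) ∂μ := swap
      _ = ∫ s in Ioi t, f s * s * ((s ^ 2 - t ^ 2) ^ (k + 1) / ((k : ℝ) + 1)) :=
          setIntegral_congr_fun measurableSet_Ioi (fun s hs => val_s s hs)
      _ = ∫ s in Ioi t, (f s * s * (s ^ 2 - t ^ 2) ^ (k + 1)) / ((k : ℝ) + 1) :=
          setIntegral_congr_fun measurableSet_Ioi (fun s hs => (mul_div_assoc _ _ _).symm)
      _ = (∫ s in Ioi t, f s * s * (s ^ 2 - t ^ 2) ^ (k + 1)) / ((k : ℝ) + 1) :=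
          integral_div _ _

lemma cont_Gk (hloc : LocallyIntegrableOn f (Ioi (0 : ℝ)))
    (hint : IntegrableOn (fun s => |f s| * s ^ (2 * (m : ℝ) - 1)) (Ioi (1 : ℝ)))
    (j : ℕ) (hj : (2 * (j : ℝ) + 1) ≤ 2 * (m : ℝ) - 1) {t : ℝ} (ht : 0 < t) :
    ContinuousAt (Gk f j) t := by
  cases j with
  | zero =>
    have hi := int_kernel hloc hint 0 (by push_cast; linarith) 0 (half_pos ht)
    simp only [pow_zero, mul_one] at hi
    have h1 : Gk f 0 = fun x => ∫ s in Ioi x, f s * s := by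
      funext x
      simp [Gk]
    rw [h1]
    exact contAt_integral_Ioi_loc _ hi (half_lt_self ht)
  | succ j' =>
    have hj' : (2 * (j' : ℝ) + 3) ≤ 2 * (m : ℝ) - 1 := by push_cast at hj ⊢; linarith
    have hfs := fubini_step hloc hint j' hj' (half_pos ht)
    have hca : ContinuousAt (fun x => ((j' : ℝ) + 1) * ∫ u in Ioi x, 2 * u * Gk f j' u) t :=
      (contAt_integral_Ioi_loc _ hfs.1 (half_lt_self ht)).const_mul _
    apply hca.congr
    filter_upwards [isOpen_Ioi.mem_nhds ht] with x (hx : 0 < x)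
    have h2 := (fubini_step hloc hint j' hj' hx).2
    rw [h2]
    field_simp

lemma hasDerivAt_Gk (hloc : LocallyIntegrableOn f (Ioi (0 : ℝ)))
    (hint : IntegrableOn (fun s => |f s| * s ^ (2 * (m : ℝ) - 1)) (Ioi (1 : ℝ)))
    (j : ℕ) (hj : (2 * (j : ℝ) + 3) ≤ 2 * (m : ℝ) - 1) {t : ℝ} (ht : 0 < t) :
    HasDerivAt (Gk f (j + 1)) (-(((j : ℝ) + 1) * (2 * t * Gk f j t))) t := by
  have hfs := fubini_step hloc hint j hj (half_pos ht)
  have hcont : ContinuousAt (fun u => 2 * u * Gk f j u) t :=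
    ((continuous_const.mul continuous_id).continuousAt).mul
      (cont_Gk hloc hint j (by linarith) ht)
  have hD := hasDerivAt_integral_Ioi_loc _ hfs.1 (half_lt_self ht) hcont
  have hD2 := hD.const_mul ((j : ℝ) + 1)
  have hev : Gk f (j + 1) =ᶠ[𝓝 t]
      fun x => ((j : ℝ) + 1) * ∫ u in Ioi x, 2 * u * Gk f j u := by
    filter_upwards [isOpen_Ioi.mem_nhds ht] with x (hx : 0 < x)
    have h2 := (fubini_step hloc hint j hj hx).2
    rw [h2]
    field_simp
  have := hD2.congr_of_eventuallyEq hev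
  exact this.congr_deriv (by ring)

end Aux

/-- If `φ = I^m_{-,2} f` with `m` a positive integer, `f` locally integrable on `(0,∞)` and
`∫₁^∞ |f(s)| s^{2m-1} ds < ∞`, then `f(t) = ((-D)^m φ)(t)` for almost all `t > 0`. -/
theorem ek_integer_order_inversion (m : ℕ) (hm : 0 < m) (f : ℝ → ℝ)
    (hloc : LocallyIntegrableOn f (Ioi (0 : ℝ)))
    (hint : IntegrableOn (fun s => |f s| * s ^ (2 * (m : ℝ) - 1)) (Ioi (1 : ℝ))) :
    ∀ᵐ t ∂(volume.restrict (Ioi (0 : ℝ))),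
      (negD^[m] (EKminus (m : ℝ) f)) t = f t := by
  obtain ⟨n, rfl⟩ : ∃ n, m = n + 1 := ⟨m - 1, (Nat.succ_pred_eq_of_pos hm).symm⟩
  have key : ∀ i j : ℕ, i + (j + 1) = n + 1 → ∀ t ∈ Ioi (0:ℝ),
      (negD^[i] (EKminus ((n + 1 : ℕ) : ℝ) f)) t = 2 * ((j.factorial : ℝ))⁻¹ * Gk f j t := by
    intro i
    induction i with
    | zero =>
      intro j hij t ht
      simp only [Function.iterate_zero, id_eq]
      have hmj : ((n + 1 : ℕ) : ℝ) = (j : ℝ) + 1 := by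
        have h : j + 1 = n + 1 := by omega
        rw [← h]; push_cast; ring
      simp only [EKminus]
      rw [hmj, Real.Gamma_nat_eq_factorial]
      simp only [add_sub_cancel_right, Real.rpow_natCast]
      rfl
    | succ i IH =>
      intro j hij t ht
      have hij' : i + ((j + 1) + 1) = n + 1 := by omega
      rw [Function.iterate_succ_apply']
      have hev : (negD^[i] (EKminus ((n + 1 : ℕ) : ℝ) f)) =ᶠ[nhds t]
          fun x => 2 * (((j + 1).factorial : ℝ))⁻¹ * Gk f (j + 1) x := by
        filter_upwards [isOpen_Ioi.mem_nhds ht] with x hx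
        exact IH (j + 1) hij' x hx
      have hj3 : (2 * (j : ℝ) + 3) ≤ 2 * ((n + 1 : ℕ) : ℝ) - 1 := by
        have h : (j : ℝ) + 2 ≤ (n : ℝ) + 1 := by exact_mod_cast (show j + 2 ≤ n + 1 by omega)
        push_cast
        linarith
      have hder := (hasDerivAt_Gk hloc hint j hj3 (mem_Ioi.mp ht)).const_mul
        (2 * (((j + 1).factorial : ℝ))⁻¹)
      show -(deriv (negD^[i] (EKminus ((n + 1 : ℕ) : ℝ) f)) t) / (2 * t)
          = 2 * ((j.factorial : ℝ))⁻¹ * Gk f j t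
      rw [hev.deriv_eq, hder.deriv]
      have htne : (t : ℝ) ≠ 0 := ne_of_gt (mem_Ioi.mp ht)
      have hfac : (((j + 1).factorial : ℝ)) = ((j : ℝ) + 1) * (j.factorial : ℝ) := by
        rw [Nat.factorial_succ]; push_cast; ring
      have hfne : (j.factorial : ℝ) ≠ 0 := Nat.cast_ne_zero.2 (Nat.factorial_ne_zero j)
      have hjne : ((j : ℝ) + 1) ≠ 0 := by positivity
      rw [hfac]
      field_simp
  have hU : Ioi (0:ℝ) = ⋃ k : ℕ, Ioi ((1:ℝ) / (k + 1)) := by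
    ext x
    simp only [mem_Ioi, mem_iUnion]
    constructor
    · intro hx
      obtain ⟨k, hk⟩ := exists_nat_one_div_lt hx
      exact ⟨k, hk⟩
    · rintro ⟨k, hk⟩
      exact lt_trans (by positivity) hk
  rw [hU, ae_restrict_iUnion_iff]
  intro k
  have hc0 : (0:ℝ) < 1 / (k + 1) := by positivity
  have hi0 := int_kernel hloc hint 0 (by
    push_cast
    have : (0:ℝ) ≤ (n : ℝ) := Nat.cast_nonneg n
    linarith) 0 hc0
  simp only [pow_zero, mul_one] at hi0
  have hi : IntegrableOn (fun s => 2 * (f s * s)) (Ioi ((1:ℝ) / (k + 1))) := hi0.const_mul 2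
  filter_upwards [ae_hasDerivAt_integral_Ioi_loc _ hi,
    ae_restrict_mem measurableSet_Ioi] with t hder htc
  have ht0 : (0:ℝ) < t := lt_trans hc0 htc
  rw [Function.iterate_succ_apply']
  have hev : (negD^[n] (EKminus ((n + 1 : ℕ) : ℝ) f)) =ᶠ[nhds t]
      fun x => ∫ u in Ioi x, 2 * (f u * u) := by
    filter_upwards [isOpen_Ioi.mem_nhds ht0] with x hx
    rw [key n 0 rfl x hx]
    simp only [Nat.factorial_zero, Nat.cast_one, inv_one, mul_one, Gk, pow_zero]
    rw [← integral_const_mul]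
  show -(deriv (negD^[n] (EKminus ((n + 1 : ℕ) : ℝ) f)) t) / (2 * t) = f t
  rw [hev.deriv_eq, hder.deriv]
  have htne : (t : ℝ) ≠ 0 := ne_of_gt ht0
  field_simp
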